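/- arXiv:1803.03694 — 6 statements merged into one kernel-verified Lean document; each statement's English description precedes it below -/
import Mathlib

section
/- Barrier-certificate safety (Theorem 1): Let f : ℝⁿ × ℝᵐ → ℝⁿ be continuous, let X, X_I, X_U ⊆ ℝⁿ and D ⊆ ℝᵐ be given sets, and let V : ℝⁿ → ℝ be differentiable. Suppose (i) V(x) ≤ 0 for all x ∈ X_I, (ii) V(x) > 0 for all x ∈ X_U, and (iii) the derivative of V at x applied to f(x,d) is strictly negative for all (x,d) ∈ X × D. Then for every T ≥ 0, every differentiable trajectory x : ℝ → ℝⁿ and measurable-free disturbance signal d : ℝ → ℝᵐ satisfying d(t) ∈ D and x'(t) = f(x(t), d(t)) for all t ∈ [0,T], with x(0) ∈ X_I and x(t) ∈ X for all t ∈ [0,T], one has x(t) ∉ X_U for every t ∈ [0,T]. In particular X_I is a region of safety. -/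
/-- Barrier-certificate safety (Theorem 1). -/
theorem barrier_certificate_safety {n m : ℕ}
    (f : (Fin n → ℝ) → (Fin m → ℝ) → (Fin n → ℝ))
    (hf : Continuous (fun p : (Fin n → ℝ) × (Fin m → ℝ) => f p.1 p.2))
    (X XI XU : Set (Fin n → ℝ)) (D : Set (Fin m → ℝ))
    (V : (Fin n → ℝ) → ℝ) (hV : Differentiable ℝ V)
    (hVI : ∀ x ∈ XI, V x ≤ 0)
    (hVU : ∀ x ∈ XU, V x > 0)
    (hVdec : ∀ x ∈ X, ∀ δ ∈ D, fderiv ℝ V x (f x δ) < 0)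
    (T : ℝ) (hT : 0 ≤ T)
    (x : ℝ → (Fin n → ℝ)) (d : ℝ → (Fin m → ℝ))
    (hd : ∀ t ∈ Set.Icc (0 : ℝ) T, d t ∈ D)
    (hode : ∀ t ∈ Set.Icc (0 : ℝ) T, HasDerivAt x (f (x t) (d t)) t)
    (hx0 : x 0 ∈ XI)
    (hxX : ∀ t ∈ Set.Icc (0 : ℝ) T, x t ∈ X) :
    ∀ t ∈ Set.Icc (0 : ℝ) T, x t ∉ XU := by
  have hg : ∀ t ∈ Set.Icc (0:ℝ) T,
      HasDerivAt (fun s => V (x s)) (fderiv ℝ V (x t) (f (x t) (d t))) t := by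
    intro t ht
    exact (hV (x t)).hasFDerivAt.comp_hasDerivAt t (hode t ht)
  have hanti : AntitoneOn (fun s => V (x s)) (Set.Icc 0 T) := by
    apply antitoneOn_of_deriv_nonpos (convex_Icc 0 T)
    · exact fun t ht => ((hg t ht).continuousAt).continuousWithinAt
    · intro t ht
      rw [interior_Icc] at ht
      exact ((hg t (Set.mem_Icc_of_Ioo ht)).differentiableAt).differentiableWithinAt
    · intro t ht
      rw [interior_Icc] at ht
      have ht' : t ∈ Set.Icc (0:ℝ) T := Set.mem_Icc_of_Ioo ht
      rw [((hg t ht').deriv)]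
      exact le_of_lt (hVdec _ (hxX t ht') _ (hd t ht'))
  intro t ht hmem
  have h1 : V (x t) ≤ V (x 0) := hanti (Set.left_mem_Icc.2 hT) ht ht.1
  have := hVU _ hmem
  have := hVI _ hx0
  linarith
end

section
/- Positivity of the barrier function on the backward reachable set (interpretation of constraints (7b)–(7c)): Let f : ℝⁿ × ℝᵐ → ℝⁿ, let X ⊆ ℝⁿ, X_U ⊆ ℝⁿ, D ⊆ ℝᵐ, and let B : ℝⁿ → ℝ be differentiable with (i) B(x) > 0 for all x ∈ X_U and (ii) the derivative of B at x applied to f(x,d) nonpositive for all (x,d) ∈ X × D. Then for every T ≥ 0 and every differentiable trajectory x : ℝ → ℝⁿ with disturbance d : ℝ → ℝᵐ satisfying d(t) ∈ D, x'(t) = f(x(t), d(t)), and x(t) ∈ X for all t ∈ [0,T], if x(T) ∈ X_U then B(x(0)) > 0. Consequently B is strictly positive on the invariant backward reachable set of X_U. -/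
/-- Positivity of the barrier function on the backward reachable set. -/
theorem barrier_positive_on_backward_reachable {n m : ℕ}
    (f : (Fin n → ℝ) → (Fin m → ℝ) → (Fin n → ℝ))
    (X XU : Set (Fin n → ℝ)) (D : Set (Fin m → ℝ))
    (B : (Fin n → ℝ) → ℝ) (hB : Differentiable ℝ B)
    (hBU : ∀ x ∈ XU, B x > 0)
    (hBdec : ∀ x ∈ X, ∀ δ ∈ D, fderiv ℝ B x (f x δ) ≤ 0)
    (T : ℝ) (hT : 0 ≤ T)
    (x : ℝ → (Fin n → ℝ)) (d : ℝ → (Fin m → ℝ))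
    (hd : ∀ t ∈ Set.Icc (0 : ℝ) T, d t ∈ D)
    (hode : ∀ t ∈ Set.Icc (0 : ℝ) T, HasDerivAt x (f (x t) (d t)) t)
    (hxX : ∀ t ∈ Set.Icc (0 : ℝ) T, x t ∈ X)
    (hxT : x T ∈ XU) :
    B (x 0) > 0 := by
  set g : ℝ → ℝ := fun t => B (x t) with hg
  have hgd : ∀ t ∈ Set.Icc (0 : ℝ) T,
      HasDerivAt g (fderiv ℝ B (x t) (f (x t) (d t))) t := fun t ht =>
    ((hB (x t)).hasFDerivAt.comp_hasDerivAt t (hode t ht))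
  have hanti : AntitoneOn g (Set.Icc 0 T) := by
    apply antitoneOn_of_deriv_nonpos (convex_Icc 0 T)
    · exact ContinuousOn.congr (fun t ht => ((hgd t ht).continuousAt.continuousWithinAt))
        (fun t ht => rfl) |>.mono (by simp) |>.mono le_rfl
    · intro t ht
      have ht' : t ∈ Set.Icc (0:ℝ) T := interior_subset ht
      exact ((hgd t ht').differentiableAt).differentiableWithinAt
    · intro t ht
      have ht' : t ∈ Set.Icc (0:ℝ) T := interior_subset ht
      rw [(hgd t ht').deriv]
      exact hBdec _ (hxX t ht') _ (hd t ht')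
  have h0 : g T ≤ g 0 := hanti (Set.left_mem_Icc.mpr hT) (Set.right_mem_Icc.mpr hT) hT
  exact lt_of_lt_of_le (hBU _ hxT) h0
end

section
/- The zero sublevel set of a feasible barrier function is a region of safety: Let f : ℝⁿ × ℝᵐ → ℝⁿ, let X ⊆ ℝⁿ, X_U ⊆ ℝⁿ, D ⊆ ℝᵐ, and let B : ℝⁿ → ℝ be differentiable with (i) B(x) > 0 for all x ∈ X_U and (ii) the derivative of B at x applied to f(x,d) nonpositive for all (x,d) ∈ X × D. Then the set S = {x ∈ X : B(x) ≤ 0} is a region of safety: for every T ≥ 0, every differentiable trajectory x : ℝ → ℝⁿ with disturbance d : ℝ → ℝᵐ satisfying d(t) ∈ D, x'(t) = f(x(t), d(t)), x(0) ∈ S, and x(t) ∈ X for all t ∈ [0,T], one has x(t) ∉ X_U for all t ∈ [0,T]. -/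
/-- The zero sublevel set of a feasible barrier function is a region of safety. -/
theorem barrier_sublevel_is_ROS {n m : ℕ}
    (f : (Fin n → ℝ) → (Fin m → ℝ) → (Fin n → ℝ))
    (X XU : Set (Fin n → ℝ)) (D : Set (Fin m → ℝ))
    (B : (Fin n → ℝ) → ℝ) (hB : Differentiable ℝ B)
    (hBU : ∀ x ∈ XU, B x > 0)
    (hBdec : ∀ x ∈ X, ∀ δ ∈ D, fderiv ℝ B x (f x δ) ≤ 0)
    (T : ℝ) (hT : 0 ≤ T)
    (x : ℝ → (Fin n → ℝ)) (d : ℝ → (Fin m → ℝ))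
    (hd : ∀ t ∈ Set.Icc (0 : ℝ) T, d t ∈ D)
    (hode : ∀ t ∈ Set.Icc (0 : ℝ) T, HasDerivAt x (f (x t) (d t)) t)
    (hx0 : x 0 ∈ {y ∈ X | B y ≤ 0})
    (hxX : ∀ t ∈ Set.Icc (0 : ℝ) T, x t ∈ X) :
    ∀ t ∈ Set.Icc (0 : ℝ) T, x t ∉ XU := by
  set g : ℝ → ℝ := fun t => B (x t) with hg
  have hgd : ∀ t ∈ Set.Icc (0 : ℝ) T,
      HasDerivAt g (fderiv ℝ B (x t) (f (x t) (d t))) t := fun t ht =>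
    (hB (x t)).hasFDerivAt.comp_hasDerivAt t (hode t ht)
  have hcont : ContinuousOn g (Set.Icc 0 T) := fun t ht =>
    ((hgd t ht).continuousAt).continuousWithinAt
  have hdiff : DifferentiableOn ℝ g (interior (Set.Icc 0 T)) := by
    intro t ht
    rw [interior_Icc] at ht
    exact ((hgd t ⟨le_of_lt ht.1, le_of_lt ht.2⟩).differentiableAt).differentiableWithinAt
  have hanti : AntitoneOn g (Set.Icc 0 T) := by
    apply AntitoneOn.mono (s := Set.Icc 0 T)
    · exact antitoneOn_of_deriv_nonpos (convex_Icc 0 T) hcont hdiff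
        (by
          intro t ht
          rw [interior_Icc] at ht
          have ht' : t ∈ Set.Icc (0:ℝ) T := ⟨le_of_lt ht.1, le_of_lt ht.2⟩
          rw [(hgd t ht').deriv]
          exact hBdec (x t) (hxX t ht') (d t) (hd t ht'))
    · exact le_refl _
  intro t ht hU
  have h1 : g t ≤ g 0 := hanti (Set.left_mem_Icc.2 hT) ht ht.1
  have h2 : g 0 ≤ 0 := hx0.2
  exact absurd (hBU (x t) hU) (not_lt.2 (h1.trans h2))
end

section
/- Inner approximation of the region of safety by the slack function (claim following problem (7)): Let f : ℝⁿ × ℝᵐ → ℝⁿ, let X ⊆ ℝⁿ, X_U ⊆ ℝⁿ, D ⊆ ℝᵐ, let B : ℝⁿ → ℝ be differentiable and Ω : ℝⁿ → ℝ be any function such that (i) B(x) > 0 for all x ∈ X_U, (ii) the derivative of B at x applied to f(x,d) is nonpositive for all (x,d) ∈ X × D, and (iii) Ω(x) ≥ B(x) + 1 and Ω(x) ≥ 0 for all x ∈ X. Then the zero sublevel set of Ω − 1 within X, namely {x ∈ X : Ω(x) ≤ 1}, is a region of safety: for every T ≥ 0, every differentiable trajectory x : ℝ → ℝⁿ with disturbance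 d : ℝ → ℝᵐ satisfying d(t) ∈ D, x'(t) = f(x(t), d(t)), x(0) ∈ {x ∈ X : Ω(x) ≤ 1}, and x(t) ∈ X for all t ∈ [0,T], one has x(t) ∉ X_U for all t ∈ [0,T]. -/
/-- Inner approximation of the region of safety by the slack function. -/
theorem slack_sublevel_is_ROS {n m : ℕ}
    (f : (Fin n → ℝ) → (Fin m → ℝ) → (Fin n → ℝ))
    (X XU : Set (Fin n → ℝ)) (D : Set (Fin m → ℝ))
    (B : (Fin n → ℝ) → ℝ) (hB : Differentiable ℝ B)
    (Ω : (Fin n → ℝ) → ℝ)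
    (hBU : ∀ x ∈ XU, B x > 0)
    (hBdec : ∀ x ∈ X, ∀ δ ∈ D, fderiv ℝ B x (f x δ) ≤ 0)
    (hΩB : ∀ x ∈ X, Ω x ≥ B x + 1)
    (hΩpos : ∀ x ∈ X, Ω x ≥ 0)
    (T : ℝ) (hT : 0 ≤ T)
    (x : ℝ → (Fin n → ℝ)) (d : ℝ → (Fin m → ℝ))
    (hd : ∀ t ∈ Set.Icc (0 : ℝ) T, d t ∈ D)
    (hode : ∀ t ∈ Set.Icc (0 : ℝ) T, HasDerivAt x (f (x t) (d t)) t)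
    (hx0 : x 0 ∈ {y ∈ X | Ω y ≤ 1})
    (hxX : ∀ t ∈ Set.Icc (0 : ℝ) T, x t ∈ X) :
    ∀ t ∈ Set.Icc (0 : ℝ) T, x t ∉ XU := by
  set g : ℝ → ℝ := fun t => B (x t) with hg
  have hgderiv : ∀ t ∈ Set.Icc (0 : ℝ) T,
      HasDerivAt g (fderiv ℝ B (x t) (f (x t) (d t))) t := fun t ht =>
    (hB.differentiableAt.hasFDerivAt).comp_hasDerivAt t (hode t ht)
  have hcont : ContinuousOn g (Set.Icc 0 T) := fun t ht =>
    ((hgderiv t ht).continuousAt).continuousWithinAt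
  have hanti : AntitoneOn g (Set.Icc 0 T) := by
    apply antitoneOn_of_deriv_nonpos (convex_Icc 0 T) hcont
    · intro t ht
      rw [interior_Icc] at ht
      exact ((hgderiv t ⟨le_of_lt ht.1, le_of_lt ht.2⟩).differentiableAt).differentiableWithinAt
    · intro t ht
      rw [interior_Icc] at ht
      have ht' : t ∈ Set.Icc (0 : ℝ) T := ⟨le_of_lt ht.1, le_of_lt ht.2⟩
      rw [(hgderiv t ht').deriv]
      exact hBdec (x t) (hxX t ht') (d t) (hd t ht')
  intro t ht hXU
  have h0 : (0 : ℝ) ∈ Set.Icc (0 : ℝ) T := ⟨le_refl _, hT⟩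
  have hgle : g t ≤ g 0 := hanti h0 ht ht.1
  have hB0 : B (x 0) ≤ 0 := by
    have := hΩB (x 0) hx0.1
    linarith [hx0.2]
  have := hBU (x t) hXU
  simp only [hg] at hgle
  linarith
end

section
/- Safe switching principle (Proposition 1): Let f_i, f_j : ℝⁿ × ℝᵐ → ℝⁿ be the vector fields of two modes, let X ⊆ ℝⁿ, X_U ⊆ ℝⁿ, D ⊆ ℝᵐ, and let B_j : ℝⁿ → ℝ be differentiable with (i) B_j(x) > 0 for all x ∈ X_U and (ii) the derivative of B_j at x applied to f_j(x,d) nonpositive for all (x,d) ∈ X × D, so that S_j = {x ∈ X : B_j(x) ≤ 0} is the region of safety of mode j. Let t_s ≥ 0 be a switching time, T ≥ t_s, and x : ℝ → ℝⁿ a differentiable curve with disturbance d : ℝ → ℝᵐ, d(t) ∈ D, such that x'(t) = f_i(x(t), d(t)) for t ∈ [0, t_s], x'(t) = f_j(x(t), d(t)) for t ∈ [t_s, T], and x(t) ∈ X for all t ∈ [0,T]. If B_j(x(t_s)) ≤ 0, then x(t) ∉ X_U for all t ∈ [t_s, T]; i.e., switching from mode i to mode j at t_s is safe. -/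
/-- Safe switching principle (Proposition 1). -/
theorem safe_switching_principle {n m : ℕ}
    (fi fj : (Fin n → ℝ) → (Fin m → ℝ) → (Fin n → ℝ))
    (X XU : Set (Fin n → ℝ)) (D : Set (Fin m → ℝ))
    (Bj : (Fin n → ℝ) → ℝ) (hBj : Differentiable ℝ Bj)
    (hBU : ∀ x ∈ XU, Bj x > 0)
    (hBdec : ∀ x ∈ X, ∀ δ ∈ D, fderiv ℝ Bj x (fj x δ) ≤ 0)
    (ts T : ℝ) (hts : 0 ≤ ts) (hT : ts ≤ T)
    (x : ℝ → (Fin n → ℝ)) (d : ℝ → (Fin m → ℝ))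
    (hd : ∀ t ∈ Set.Icc (0 : ℝ) T, d t ∈ D)
    (hodei : ∀ t ∈ Set.Icc (0 : ℝ) ts, HasDerivAt x (fi (x t) (d t)) t)
    (hodej : ∀ t ∈ Set.Icc ts T, HasDerivAt x (fj (x t) (d t)) t)
    (hxX : ∀ t ∈ Set.Icc (0 : ℝ) T, x t ∈ X)
    (hswitch : Bj (x ts) ≤ 0) :
    ∀ t ∈ Set.Icc ts T, x t ∉ XU := by
  have hsub : Set.Icc ts T ⊆ Set.Icc (0 : ℝ) T := Set.Icc_subset_Icc hts le_rfl
  set g : ℝ → ℝ := fun t => Bj (x t) with hg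
  have hgd : ∀ t ∈ Set.Icc ts T,
      HasDerivAt g (fderiv ℝ Bj (x t) (fj (x t) (d t))) t := fun t ht =>
    (hBj (x t)).hasFDerivAt.comp_hasDerivAt t (hodej t ht)
  have hanti : AntitoneOn g (Set.Icc ts T) := by
    apply antitoneOn_of_deriv_nonpos (convex_Icc ts T)
    · exact fun t ht => (hgd t ht).continuousAt.continuousWithinAt
    · intro t ht
      rw [interior_Icc] at ht
      exact ((hgd t (Set.mem_Icc.2 ⟨ht.1.le, ht.2.le⟩)).differentiableAt).differentiableWithinAt
    · intro t ht
      rw [interior_Icc] at ht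
      have ht' : t ∈ Set.Icc ts T := Set.mem_Icc.2 ⟨ht.1.le, ht.2.le⟩
      rw [(hgd t ht').deriv]
      exact hBdec _ (hxX t (hsub ht')) _ (hd t (hsub ht'))
  intro t ht hmem
  have h1 : g t ≤ g ts := hanti (Set.left_mem_Icc.2 hT) ht ht.1
  exact absurd (hBU _ hmem) (not_lt.2 (h1.trans hswitch))
end

section
/- The sublevel set of a feasible barrier function inner-approximates the complement of the backward reachable set: Let f : ℝⁿ × ℝᵐ → ℝⁿ, let X ⊆ ℝⁿ, X_U ⊆ X, X_S = X \ X_U, D ⊆ ℝᵐ, and let B : ℝⁿ → ℝ be differentiable with (i) B(x) > 0 for all x ∈ X_U and (ii) the derivative of B at x applied to f(x,d) nonpositive for all (x,d) ∈ X × D. Define the invariant backward reachable set X_B* as the set of points x₀ ∈ X from which some trajectory remaining in X reaches X_U in finite time. Then {x ∈ X_S : B(x) ≤ 0} ⊆ X_S \ X_B*; equivalently, the zero superlevel set {x ∈ X : B(x) > 0} over-approximates X_B*. -/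
/-- The invariant backward reachable set of `XU`: points of `X` from which
some trajectory remaining in `X` reaches `XU` in finite time. -/
def BackwardReach {n m : ℕ} (f : (Fin n → ℝ) → (Fin m → ℝ) → (Fin n → ℝ))
    (X XU : Set (Fin n → ℝ)) (D : Set (Fin m → ℝ)) : Set (Fin n → ℝ) :=
  {x0 ∈ X | ∃ T : ℝ, 0 ≤ T ∧ ∃ x : ℝ → (Fin n → ℝ), ∃ d : ℝ → (Fin m → ℝ),
    (∀ t ∈ Set.Icc (0 : ℝ) T, d t ∈ D) ∧
    (∀ t ∈ Set.Icc (0 : ℝ) T, HasDerivAt x (f (x t) (d t)) t) ∧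
    (∀ t ∈ Set.Icc (0 : ℝ) T, x t ∈ X) ∧
    x 0 = x0 ∧ x T ∈ XU}

/-- The sublevel set of a feasible barrier function inner-approximates the
complement of the backward reachable set. -/
theorem barrier_sublevel_inner_approx {n m : ℕ}
    (f : (Fin n → ℝ) → (Fin m → ℝ) → (Fin n → ℝ))
    (X XU : Set (Fin n → ℝ)) (hXU : XU ⊆ X) (D : Set (Fin m → ℝ))
    (B : (Fin n → ℝ) → ℝ) (hB : Differentiable ℝ B)
    (hBU : ∀ x ∈ XU, B x > 0)
    (hBdec : ∀ x ∈ X, ∀ δ ∈ D, fderiv ℝ B x (f x δ) ≤ 0) :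
    {y ∈ X \ XU | B y ≤ 0} ⊆ (X \ XU) \ BackwardReach f X XU D := by
  rintro y ⟨hyS, hBy⟩
  refine ⟨hyS, ?_⟩
  rintro ⟨-, T, hT, x, d, hd, hderiv, hX, hx0, hxT⟩
  -- B ∘ x has nonpositive derivative on [0,T], hence is antitone there
  have hderivBx : ∀ t ∈ Set.Icc (0 : ℝ) T,
      HasDerivAt (fun s => B (x s)) (fderiv ℝ B (x t) (f (x t) (d t))) t := by
    intro t ht
    exact (hB (x t)).hasFDerivAt.comp_hasDerivAt t (hderiv t ht)
  have hanti : AntitoneOn (fun s => B (x s)) (Set.Icc 0 T) := by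
    apply antitoneOn_of_deriv_nonpos (convex_Icc 0 T)
    · intro t ht
      exact (hderivBx t ht).continuousAt.continuousWithinAt
    · intro t ht
      rw [interior_Icc] at ht
      exact ((hderivBx t (Set.Ioo_subset_Icc_self ht)).differentiableAt).differentiableWithinAt
    · intro t ht
      rw [interior_Icc] at ht
      have ht' : t ∈ Set.Icc (0 : ℝ) T := Set.Ioo_subset_Icc_self ht
      rw [(hderivBx t ht').deriv]
      exact hBdec (x t) (hX t ht') (d t) (hd t ht')
  have h1 : B (x T) ≤ B (x 0) :=
    hanti (Set.left_mem_Icc.mpr hT) (Set.right_mem_Icc.mpr hT) hT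
  rw [hx0] at h1
  exact absurd (hBU (x T) hxT) (by linarith)
end
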